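/- Let q be a nonzero real number and ℓ a complex number with |ℓ| = 1. Then: (i) there exists a unique star structure ★ₑ on the complex q-linked Minkowski algebra M^{ℓ,q} with t₁₁^{★ₑ} = −q⁻¹ℓ·t₂₂, t₁₂^{★ₑ} = t₂₁, t₂₁^{★ₑ} = t₁₂, t₂₂^{★ₑ} = −qℓ·t₁₁; (ii) there exists a unique star structure ★ₑ⊕★ₑ on the q-linked complex Lorentz algebra L_{q,ℓ} with a ↦ d, b ↦ −q⁻¹c, c ↦ −qb, d ↦ a, a' ↦ d', b' ↦ −q⁻¹c', c' ↦ −qb', d' ↦ a'; (iii) the coaction ρ intertwines these star structures: ρ ∘ ★ₑ = ((★ₑ⊕★ₑ) ⊗ ★ₑ) ∘ ρ. (Thus the real q-linked Euclidean space is a quantum homogeneous space for the deformed Euclidean group SO_q^{ℓ}(4).) -/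

import Mathlib

noncomputable section

open FreeAlgebra
open scoped TensorProduct

/-- The relations of the q-linked complex Lorentz algebra `L_{q,ℓ}`: generators
`a = ι ℂ 0, b = ι ℂ 1, c = ι ℂ 2, d = ι ℂ 3` and `a' = ι ℂ 4, b' = ι ℂ 5,
c' = ι ℂ 6, d' = ι ℂ 7`, Manin relations with parameter `q` in both sectors, the
link relations, the commutation relations, and the determinant relations. -/
inductive LRel (q ℓ : ℂ) : FreeAlgebra ℂ (Fin 8) → FreeAlgebra ℂ (Fin 8) → Prop
  | ab : LRel q ℓ (ι ℂ 0 * ι ℂ 1) (q⁻¹ • (ι ℂ 1 * ι ℂ 0))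
  | ac : LRel q ℓ (ι ℂ 0 * ι ℂ 2) (q⁻¹ • (ι ℂ 2 * ι ℂ 0))
  | bd : LRel q ℓ (ι ℂ 1 * ι ℂ 3) (q⁻¹ • (ι ℂ 3 * ι ℂ 1))
  | cd : LRel q ℓ (ι ℂ 2 * ι ℂ 3) (q⁻¹ • (ι ℂ 3 * ι ℂ 2))
  | bc : LRel q ℓ (ι ℂ 1 * ι ℂ 2) (ι ℂ 2 * ι ℂ 1)
  | ad : LRel q ℓ (ι ℂ 0 * ι ℂ 3 - ι ℂ 3 * ι ℂ 0) ((q⁻¹ - q) • (ι ℂ 1 * ι ℂ 2))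
  | ab' : LRel q ℓ (ι ℂ 4 * ι ℂ 5) (q⁻¹ • (ι ℂ 5 * ι ℂ 4))
  | ac' : LRel q ℓ (ι ℂ 4 * ι ℂ 6) (q⁻¹ • (ι ℂ 6 * ι ℂ 4))
  | bd' : LRel q ℓ (ι ℂ 5 * ι ℂ 7) (q⁻¹ • (ι ℂ 7 * ι ℂ 5))
  | cd' : LRel q ℓ (ι ℂ 6 * ι ℂ 7) (q⁻¹ • (ι ℂ 7 * ι ℂ 6))
  | bc' : LRel q ℓ (ι ℂ 5 * ι ℂ 6) (ι ℂ 6 * ι ℂ 5)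
  | ad' : LRel q ℓ (ι ℂ 4 * ι ℂ 7 - ι ℂ 7 * ι ℂ 4) ((q⁻¹ - q) • (ι ℂ 5 * ι ℂ 6))
  | link₁ : LRel q ℓ (ι ℂ 5 * ι ℂ 0) (ℓ • (ι ℂ 0 * ι ℂ 5))
  | link₂ : LRel q ℓ (ι ℂ 0 * ι ℂ 6) (ℓ • (ι ℂ 6 * ι ℂ 0))
  | link₃ : LRel q ℓ (ι ℂ 4 * ι ℂ 1) (ℓ • (ι ℂ 1 * ι ℂ 4))
  | link₄ : LRel q ℓ (ι ℂ 1 * ι ℂ 7) (ℓ • (ι ℂ 7 * ι ℂ 1))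
  | link₅ : LRel q ℓ (ι ℂ 2 * ι ℂ 4) (ℓ • (ι ℂ 4 * ι ℂ 2))
  | link₆ : LRel q ℓ (ι ℂ 7 * ι ℂ 2) (ℓ • (ι ℂ 2 * ι ℂ 7))
  | link₇ : LRel q ℓ (ι ℂ 3 * ι ℂ 5) (ℓ • (ι ℂ 5 * ι ℂ 3))
  | link₈ : LRel q ℓ (ι ℂ 6 * ι ℂ 3) (ℓ • (ι ℂ 3 * ι ℂ 6))
  | comm₁ : LRel q ℓ (ι ℂ 0 * ι ℂ 4) (ι ℂ 4 * ι ℂ 0)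
  | comm₂ : LRel q ℓ (ι ℂ 0 * ι ℂ 7) (ι ℂ 7 * ι ℂ 0)
  | comm₃ : LRel q ℓ (ι ℂ 1 * ι ℂ 5) (ι ℂ 5 * ι ℂ 1)
  | comm₄ : LRel q ℓ (ι ℂ 1 * ι ℂ 6) (ι ℂ 6 * ι ℂ 1)
  | comm₅ : LRel q ℓ (ι ℂ 2 * ι ℂ 5) (ι ℂ 5 * ι ℂ 2)
  | comm₆ : LRel q ℓ (ι ℂ 2 * ι ℂ 6) (ι ℂ 6 * ι ℂ 2)
  | comm₇ : LRel q ℓ (ι ℂ 3 * ι ℂ 4) (ι ℂ 4 * ι ℂ 3)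
  | comm₈ : LRel q ℓ (ι ℂ 3 * ι ℂ 7) (ι ℂ 7 * ι ℂ 3)
  | det : LRel q ℓ (ι ℂ 0 * ι ℂ 3 - q⁻¹ • (ι ℂ 1 * ι ℂ 2)) 1
  | det' : LRel q ℓ (ι ℂ 4 * ι ℂ 7 - q⁻¹ • (ι ℂ 5 * ι ℂ 6)) 1

/-- The q-linked complex Lorentz algebra `L_{q,ℓ}`. -/
abbrev LAlg (q ℓ : ℂ) := RingQuot (LRel q ℓ)

/-- The images of the eight generators of `L_{q,ℓ}`. -/
def lgen (q ℓ : ℂ) (i : Fin 8) : LAlg q ℓ :=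
  RingQuot.mkAlgHom ℂ (LRel q ℓ) (ι ℂ i)

/-- The relations of the complex q-linked Minkowski algebra `M^{ℓ,q}`, with
generators `t₁₁ = ι ℂ 0`, `t₁₂ = ι ℂ 1`, `t₂₁ = ι ℂ 2`, `t₂₂ = ι ℂ 3`. -/
inductive MRel (q ℓ : ℂ) : FreeAlgebra ℂ (Fin 4) → FreeAlgebra ℂ (Fin 4) → Prop
  | r₁ : MRel q ℓ (ι ℂ 0 * ι ℂ 1) ((q * ℓ) • (ι ℂ 1 * ι ℂ 0))
  | r₂ : MRel q ℓ (ι ℂ 1 * ι ℂ 3) ((q⁻¹ * ℓ) • (ι ℂ 3 * ι ℂ 1))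
  | r₃ : MRel q ℓ (ι ℂ 0 * ι ℂ 2) ((q⁻¹ * ℓ⁻¹) • (ι ℂ 2 * ι ℂ 0))
  | r₄ : MRel q ℓ (ι ℂ 2 * ι ℂ 3) ((q * ℓ⁻¹) • (ι ℂ 3 * ι ℂ 2))
  | r₅ : MRel q ℓ (ι ℂ 0 * ι ℂ 3) (ι ℂ 3 * ι ℂ 0)
  | r₆ : MRel q ℓ (ι ℂ 1 * ι ℂ 2) (ι ℂ 2 * ι ℂ 1 + (ℓ * (q⁻¹ - q)) • (ι ℂ 0 * ι ℂ 3))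

/-- The complex q-linked Minkowski algebra `M^{ℓ,q}`. -/
abbrev MAlg (q ℓ : ℂ) := RingQuot (MRel q ℓ)

/-- The images of the generators `t₁₁, t₁₂, t₂₁, t₂₂` of `M^{ℓ,q}`. -/
def tgen (q ℓ : ℂ) (i : Fin 4) : MAlg q ℓ :=
  RingQuot.mkAlgHom ℂ (MRel q ℓ) (ι ℂ i)

/-- The matrix `(t_{ij})` of generators of `M^{ℓ,q}`. -/
def tmat (q ℓ : ℂ) : Fin 2 → Fin 2 → MAlg q ℓ :=
  ![![tgen q ℓ 0, tgen q ℓ 1], ![tgen q ℓ 2, tgen q ℓ 3]]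

/-- The quantum metric `Q_{ℓ/q} = t₁₂ t₂₁ − q⁻¹ℓ · t₁₁ t₂₂`. -/
def Qmetric (q ℓ : ℂ) : MAlg q ℓ :=
  tgen q ℓ 1 * tgen q ℓ 2 - (q⁻¹ * ℓ) • (tgen q ℓ 0 * tgen q ℓ 3)

/-- The antichiral matrix `(y_{ij}) = (a' b'; c' d')` of `L_{q,ℓ}`. -/
def ymat (q ℓ : ℂ) : Fin 2 → Fin 2 → LAlg q ℓ :=
  ![![lgen q ℓ 4, lgen q ℓ 5], ![lgen q ℓ 6, lgen q ℓ 7]]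

/-- The entrywise antipode `(σ_{ij}) = (d −qb; −q⁻¹c a)` of the chiral matrix of
`L_{q,ℓ}`. -/
def σmat (q ℓ : ℂ) : Fin 2 → Fin 2 → LAlg q ℓ :=
  ![![lgen q ℓ 3, (-q) • lgen q ℓ 1], ![(-q⁻¹) • lgen q ℓ 2, lgen q ℓ 0]]

/-- `ρ` is the coaction of `L_{q,ℓ}` on `M^{ℓ,q}`:
`ρ(t_{ij}) = Σ_{s,r} y_{is} σ_{rj} ⊗ t_{sr}`. -/
def IsCoaction (q ℓ : ℂ) (ρ : MAlg q ℓ →ₐ[ℂ] (LAlg q ℓ ⊗[ℂ] MAlg q ℓ)) : Prop :=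
  ∀ i j : Fin 2, ρ (tmat q ℓ i j) =
    ∑ s : Fin 2, ∑ r : Fin 2, (ymat q ℓ i s * σmat q ℓ r j) ⊗ₜ[ℂ] tmat q ℓ s r

/-- A star structure on a complex algebra: additive, conjugate-linear,
antimultiplicative, unital, involutive. -/
def IsStar {A : Type*} [Ring A] [Algebra ℂ A] (st : A → A) : Prop :=
  (∀ x y : A, st (x + y) = st x + st y) ∧
  (∀ (z : ℂ) (x : A), st (z • x) = (starRingEnd ℂ) z • st x) ∧
  (∀ x y : A, st (x * y) = st y * st x) ∧
  st 1 = 1 ∧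
  (∀ x : A, st (st x) = x)

/-- The prescribed values of the star structure on the Minkowski generators. -/
def MStarVals (q ℓ : ℂ) (st : MAlg q ℓ → MAlg q ℓ) : Prop :=
  st (tgen q ℓ 0) = (-(q⁻¹ * ℓ)) • tgen q ℓ 3 ∧ st (tgen q ℓ 1) = tgen q ℓ 2 ∧
  st (tgen q ℓ 2) = tgen q ℓ 1 ∧ st (tgen q ℓ 3) = (-(q * ℓ)) • tgen q ℓ 0

/-- The prescribed values of the star structure on the generators of `L_{q,ℓ}`. -/
def LStarVals (q ℓ : ℂ) (st : LAlg q ℓ → LAlg q ℓ) : Prop :=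
  st (lgen q ℓ 0) = lgen q ℓ 3 ∧ st (lgen q ℓ 1) = (-q⁻¹) • lgen q ℓ 2 ∧
  st (lgen q ℓ 2) = (-q) • lgen q ℓ 1 ∧ st (lgen q ℓ 3) = lgen q ℓ 0 ∧
  st (lgen q ℓ 4) = lgen q ℓ 7 ∧ st (lgen q ℓ 5) = (-q⁻¹) • lgen q ℓ 6 ∧
  st (lgen q ℓ 6) = (-q) • lgen q ℓ 5 ∧ st (lgen q ℓ 7) = lgen q ℓ 4

open MulOpposite in
noncomputable def stFreeRH {n : ℕ} {A : Type*} [Ring A] [Algebra ℂ A] (v : Fin n → A) :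
    FreeAlgebra ℂ (Fin n) →+* Aᵐᵒᵖ :=
  (MonoidAlgebra.liftNCRingHom ((algebraMap ℂ Aᵐᵒᵖ).comp (starRingEnd ℂ))
    (FreeMonoid.lift fun i => MulOpposite.op (v i)) (fun z m => (Algebra.commutes ((starRingEnd ℂ) z)
      ((FreeMonoid.lift fun i => MulOpposite.op (v i)) m)))).comp
    (equivMonoidAlgebraFreeMonoid (R := ℂ) (X := Fin n)).toRingEquiv.toRingHom

noncomputable def stFree {n : ℕ} {A : Type*} [Ring A] [Algebra ℂ A] (v : Fin n → A) :
    FreeAlgebra ℂ (Fin n) → A := fun x => (stFreeRH v x).unop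

section generic
variable {n : ℕ} {A : Type*} [Ring A] [Algebra ℂ A] (v : Fin n → A)

theorem equivMAF_ι (i : Fin n) : equivMonoidAlgebraFreeMonoid (R := ℂ) (ι ℂ i)
    = MonoidAlgebra.of ℂ (FreeMonoid (Fin n)) (FreeMonoid.of i) := by
  simp [equivMonoidAlgebraFreeMonoid]

theorem stFree_ι (i : Fin n) : stFree v (ι ℂ i) = v i := by
  simp [stFree, stFreeRH, equivMAF_ι, MonoidAlgebra.liftNCRingHom,
    MonoidAlgebra.of_apply, MonoidAlgebra.liftNC_single]

theorem stFree_algebraMap (z : ℂ) :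
    stFree v (algebraMap ℂ _ z) = algebraMap ℂ A ((starRingEnd ℂ) z) := by
  simp only [stFree, stFreeRH, RingHom.comp_apply, RingEquiv.toRingHom_eq_coe,
    RingHom.coe_coe, AlgEquiv.toRingEquiv_eq_coe, AlgEquiv.coe_ringEquiv,
    AlgEquiv.commutes]
  rw [MonoidAlgebra.coe_algebraMap]
  simp [MonoidAlgebra.liftNCRingHom, MonoidAlgebra.liftNC_single]

theorem stFree_mul (x y : FreeAlgebra ℂ (Fin n)) :
    stFree v (x * y) = stFree v y * stFree v x := by simp [stFree, map_mul]

theorem stFree_add (x y : FreeAlgebra ℂ (Fin n)) :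
    stFree v (x + y) = stFree v x + stFree v y := by simp [stFree, map_add]

theorem stFree_sub (x y : FreeAlgebra ℂ (Fin n)) :
    stFree v (x - y) = stFree v x - stFree v y := by simp [stFree, map_sub]

theorem stFree_one : stFree v 1 = 1 := by simp [stFree, map_one]

theorem stFree_smul (z : ℂ) (x : FreeAlgebra ℂ (Fin n)) :
    stFree v (z • x) = (starRingEnd ℂ) z • stFree v x := by
  rw [Algebra.smul_def, stFree_mul, stFree_algebraMap, ← Algebra.commutes, ← Algebra.smul_def]

variable {rel : FreeAlgebra ℂ (Fin n) → FreeAlgebra ℂ (Fin n) → Prop}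

/-- descend an anti-hom to the quotient -/
noncomputable def mkStar (v : Fin n → RingQuot rel)
    (compat : ∀ ⦃x y⦄, rel x y → stFree v x = stFree v y) :
    RingQuot rel → RingQuot rel :=
  fun x => (RingQuot.lift ⟨stFreeRH v, fun x y h => MulOpposite.unop_injective (compat h)⟩ x).unop

variable (vq : Fin n → RingQuot rel)
  (compat : ∀ ⦃x y⦄, rel x y → stFree vq x = stFree vq y)

theorem mkStar_mk (x : FreeAlgebra ℂ (Fin n)) :
    mkStar vq compat (RingQuot.mkAlgHom ℂ rel x) = stFree vq x := by
  have : RingQuot.mkAlgHom ℂ rel x = RingQuot.mkRingHom rel x := by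
    rw [← RingQuot.mkAlgHom_coe ℂ rel]; rfl
  rw [mkStar, this, RingQuot.lift_mkRingHom_apply]; rfl

theorem mkStar_add (x y : RingQuot rel) :
    mkStar vq compat (x + y) = mkStar vq compat x + mkStar vq compat y := by
  simp [mkStar, map_add]

theorem mkStar_mul (x y : RingQuot rel) :
    mkStar vq compat (x * y) = mkStar vq compat y * mkStar vq compat x := by
  simp [mkStar, map_mul]

theorem mkStar_one : mkStar vq compat 1 = 1 := by simp [mkStar, map_one]

theorem mkStar_algebraMap (z : ℂ) :
    mkStar vq compat (algebraMap ℂ _ z) = algebraMap ℂ _ ((starRingEnd ℂ) z) := by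
  rw [← (RingQuot.mkAlgHom ℂ rel).commutes, mkStar_mk, stFree_algebraMap]

theorem mkStar_smul (z : ℂ) (x : RingQuot rel) :
    mkStar vq compat (z • x) = (starRingEnd ℂ) z • mkStar vq compat x := by
  rw [Algebra.smul_def, mkStar_mul, mkStar_algebraMap, ← Algebra.commutes, ← Algebra.smul_def]

theorem mkStar_gen (i : Fin n) :
    mkStar vq compat (RingQuot.mkAlgHom ℂ rel (ι ℂ i)) = vq i := by
  rw [mkStar_mk, stFree_ι]

/-- induction principle -/
theorem ringQuot_induction {P : RingQuot rel → Prop}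
    (halg : ∀ z : ℂ, P (algebraMap ℂ _ z))
    (hgen : ∀ i : Fin n, P (RingQuot.mkAlgHom ℂ rel (ι ℂ i)))
    (hadd : ∀ x y, P x → P y → P (x + y))
    (hmul : ∀ x y, P x → P y → P (x * y)) : ∀ x, P x := by
  intro x
  obtain ⟨y, rfl⟩ := RingQuot.mkAlgHom_surjective ℂ rel x
  induction y using FreeAlgebra.induction with
  | grade0 z => rw [AlgHom.commutes]; exact halg z
  | grade1 i => exact hgen i
  | mul a b ha hb => rw [map_mul]; exact hmul _ _ ha hb
  | add a b ha hb => rw [map_add]; exact hadd _ _ ha hb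

theorem IsStar.map_algebraMap {A : Type*} [Ring A] [Algebra ℂ A] {st : A → A}
    (h : IsStar st) (z : ℂ) : st (algebraMap ℂ A z) = algebraMap ℂ A ((starRingEnd ℂ) z) := by
  rw [Algebra.algebraMap_eq_smul_one, h.2.1, h.2.2.2.1, Algebra.algebraMap_eq_smul_one]

theorem star_unique (st₁ st₂ : RingQuot rel → RingQuot rel)
    (h₁ : IsStar st₁) (h₂ : IsStar st₂)
    (hgen : ∀ i : Fin n, st₁ (RingQuot.mkAlgHom ℂ rel (ι ℂ i)) = st₂ (RingQuot.mkAlgHom ℂ rel (ι ℂ i))) :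
    st₁ = st₂ := by
  funext x
  refine ringQuot_induction (P := fun x => st₁ x = st₂ x) ?_ hgen ?_ ?_ x
  · intro z; rw [h₁.map_algebraMap, h₂.map_algebraMap]
  · intro a b ha hb; rw [h₁.1, h₂.1, ha, hb]
  · intro a b ha hb; rw [h₁.2.2.1, h₂.2.2.1, ha, hb]

end generic

section Msec
variable (q ℓ : ℂ)

theorem Mrel_mk {x y : FreeAlgebra ℂ (Fin 4)} (h : MRel q ℓ x y) :
    RingQuot.mkAlgHom ℂ (MRel q ℓ) x = RingQuot.mkAlgHom ℂ (MRel q ℓ) y :=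
  RingQuot.mkAlgHom_rel ℂ h

theorem Mq₁ : tgen q ℓ 0 * tgen q ℓ 1 = (q * ℓ) • (tgen q ℓ 1 * tgen q ℓ 0) := by
  simpa [tgen, map_mul, map_smul] using Mrel_mk q ℓ MRel.r₁
theorem Mq₂ : tgen q ℓ 1 * tgen q ℓ 3 = (q⁻¹ * ℓ) • (tgen q ℓ 3 * tgen q ℓ 1) := by
  simpa [tgen, map_mul, map_smul] using Mrel_mk q ℓ MRel.r₂
theorem Mq₃ : tgen q ℓ 0 * tgen q ℓ 2 = (q⁻¹ * ℓ⁻¹) • (tgen q ℓ 2 * tgen q ℓ 0) := by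
  simpa [tgen, map_mul, map_smul] using Mrel_mk q ℓ MRel.r₃
theorem Mq₄ : tgen q ℓ 2 * tgen q ℓ 3 = (q * ℓ⁻¹) • (tgen q ℓ 3 * tgen q ℓ 2) := by
  simpa [tgen, map_mul, map_smul] using Mrel_mk q ℓ MRel.r₄
theorem Mq₅ : tgen q ℓ 0 * tgen q ℓ 3 = tgen q ℓ 3 * tgen q ℓ 0 := by
  simpa [tgen, map_mul] using Mrel_mk q ℓ MRel.r₅
theorem Mq₆ : tgen q ℓ 1 * tgen q ℓ 2 =
    tgen q ℓ 2 * tgen q ℓ 1 + (ℓ * (q⁻¹ - q)) • (tgen q ℓ 0 * tgen q ℓ 3) := by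
  simpa [tgen, map_mul, map_add, map_smul] using Mrel_mk q ℓ MRel.r₆

/-- the values of the Euclidean star on the Minkowski generators -/
def vM : Fin 4 → MAlg q ℓ :=
  ![(-(q⁻¹ * ℓ)) • tgen q ℓ 3, tgen q ℓ 2, tgen q ℓ 1, (-(q * ℓ)) • tgen q ℓ 0]

theorem compatM (hcq : (starRingEnd ℂ) q = q) (hq : q ≠ 0)
    (hcℓ : (starRingEnd ℂ) ℓ = ℓ⁻¹) (hℓ : ℓ ≠ 0) :
    ∀ ⦃x y⦄, MRel q ℓ x y → stFree (vM q ℓ) x = stFree (vM q ℓ) y := by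
  intro x y h
  cases h with
  | r₁ =>
      simp only [stFree_mul, stFree_smul, stFree_ι, vM, Matrix.cons_val_zero,
        Matrix.cons_val_one, Matrix.head_cons, Matrix.cons_val_two, Matrix.tail_cons,
        Matrix.cons_val_three, map_mul, map_neg, map_inv₀, hcq, hcℓ,
        smul_mul_assoc, mul_smul_comm, smul_smul]
      rw [Mq₄, smul_smul]
      congr 1
      all_goals field_simp
      all_goals ring
  | r₂ =>
      simp only [stFree_mul, stFree_smul, stFree_ι, vM, Matrix.cons_val_zero,
        Matrix.cons_val_one, Matrix.head_cons, Matrix.cons_val_two, Matrix.tail_cons,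
        Matrix.cons_val_three, map_mul, map_neg, map_inv₀, hcq, hcℓ,
        smul_mul_assoc, mul_smul_comm, smul_smul]
      rw [Mq₃, smul_smul]
      congr 1
      all_goals field_simp
      all_goals ring
  | r₃ =>
      simp only [stFree_mul, stFree_smul, stFree_ι, vM, Matrix.cons_val_zero,
        Matrix.cons_val_one, Matrix.head_cons, Matrix.cons_val_two, Matrix.tail_cons,
        Matrix.cons_val_three, map_mul, map_neg, map_inv₀, hcq, hcℓ, inv_inv,
        smul_mul_assoc, mul_smul_comm, smul_smul]
      rw [Mq₂, smul_smul]
      congr 1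
      all_goals field_simp
      all_goals ring
  | r₄ =>
      simp only [stFree_mul, stFree_smul, stFree_ι, vM, Matrix.cons_val_zero,
        Matrix.cons_val_one, Matrix.head_cons, Matrix.cons_val_two, Matrix.tail_cons,
        Matrix.cons_val_three, map_mul, map_neg, map_inv₀, hcq, hcℓ, inv_inv,
        smul_mul_assoc, mul_smul_comm, smul_smul]
      rw [Mq₁, smul_smul]
      congr 1
      all_goals field_simp
      all_goals ring
  | r₅ =>
      simp only [stFree_mul, stFree_smul, stFree_ι, vM, Matrix.cons_val_zero,
        Matrix.cons_val_one, Matrix.head_cons, Matrix.cons_val_two, Matrix.tail_cons,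
        Matrix.cons_val_three, smul_mul_assoc, mul_smul_comm, smul_smul]
      rw [Mq₅]
      congr 1
      all_goals ring
  | r₆ =>
      simp only [stFree_mul, stFree_smul, stFree_add, stFree_ι, vM, Matrix.cons_val_zero,
        Matrix.cons_val_one, Matrix.head_cons, Matrix.cons_val_two, Matrix.tail_cons,
        Matrix.cons_val_three, map_mul, map_neg, map_inv₀, map_sub, hcq, hcℓ,
        smul_mul_assoc, mul_smul_comm, smul_smul]
      rw [Mq₆]
      congr 2
      all_goals field_simp
      all_goals ring

end Msec

section Lsec
variable (q ℓ : ℂ)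

theorem Lrel_mk {x y : FreeAlgebra ℂ (Fin 8)} (h : LRel q ℓ x y) :
    RingQuot.mkAlgHom ℂ (LRel q ℓ) x = RingQuot.mkAlgHom ℂ (LRel q ℓ) y :=
  RingQuot.mkAlgHom_rel ℂ h

theorem Lq_ab : lgen q ℓ 0 * lgen q ℓ 1 = (q⁻¹ : ℂ) • (lgen q ℓ 1 * lgen q ℓ 0) := by
  simpa [lgen, map_mul, map_smul] using Lrel_mk q ℓ LRel.ab

theorem Lq_ac : lgen q ℓ 0 * lgen q ℓ 2 = (q⁻¹ : ℂ) • (lgen q ℓ 2 * lgen q ℓ 0) := by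
  simpa [lgen, map_mul, map_smul] using Lrel_mk q ℓ LRel.ac

theorem Lq_bd : lgen q ℓ 1 * lgen q ℓ 3 = (q⁻¹ : ℂ) • (lgen q ℓ 3 * lgen q ℓ 1) := by
  simpa [lgen, map_mul, map_smul] using Lrel_mk q ℓ LRel.bd

theorem Lq_cd : lgen q ℓ 2 * lgen q ℓ 3 = (q⁻¹ : ℂ) • (lgen q ℓ 3 * lgen q ℓ 2) := by
  simpa [lgen, map_mul, map_smul] using Lrel_mk q ℓ LRel.cd

theorem Lq_bc : lgen q ℓ 1 * lgen q ℓ 2 = lgen q ℓ 2 * lgen q ℓ 1 := by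
  simpa [lgen, map_mul] using Lrel_mk q ℓ LRel.bc

theorem Lq_ab' : lgen q ℓ 4 * lgen q ℓ 5 = (q⁻¹ : ℂ) • (lgen q ℓ 5 * lgen q ℓ 4) := by
  simpa [lgen, map_mul, map_smul] using Lrel_mk q ℓ LRel.ab'

theorem Lq_ac' : lgen q ℓ 4 * lgen q ℓ 6 = (q⁻¹ : ℂ) • (lgen q ℓ 6 * lgen q ℓ 4) := by
  simpa [lgen, map_mul, map_smul] using Lrel_mk q ℓ LRel.ac'

theorem Lq_bd' : lgen q ℓ 5 * lgen q ℓ 7 = (q⁻¹ : ℂ) • (lgen q ℓ 7 * lgen q ℓ 5) := by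
  simpa [lgen, map_mul, map_smul] using Lrel_mk q ℓ LRel.bd'

theorem Lq_cd' : lgen q ℓ 6 * lgen q ℓ 7 = (q⁻¹ : ℂ) • (lgen q ℓ 7 * lgen q ℓ 6) := by
  simpa [lgen, map_mul, map_smul] using Lrel_mk q ℓ LRel.cd'

theorem Lq_bc' : lgen q ℓ 5 * lgen q ℓ 6 = lgen q ℓ 6 * lgen q ℓ 5 := by
  simpa [lgen, map_mul] using Lrel_mk q ℓ LRel.bc'

theorem Lq_link₁ : lgen q ℓ 5 * lgen q ℓ 0 = (ℓ : ℂ) • (lgen q ℓ 0 * lgen q ℓ 5) := by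
  simpa [lgen, map_mul, map_smul] using Lrel_mk q ℓ LRel.link₁

theorem Lq_link₂ : lgen q ℓ 0 * lgen q ℓ 6 = (ℓ : ℂ) • (lgen q ℓ 6 * lgen q ℓ 0) := by
  simpa [lgen, map_mul, map_smul] using Lrel_mk q ℓ LRel.link₂

theorem Lq_link₃ : lgen q ℓ 4 * lgen q ℓ 1 = (ℓ : ℂ) • (lgen q ℓ 1 * lgen q ℓ 4) := by
  simpa [lgen, map_mul, map_smul] using Lrel_mk q ℓ LRel.link₃

theorem Lq_link₄ : lgen q ℓ 1 * lgen q ℓ 7 = (ℓ : ℂ) • (lgen q ℓ 7 * lgen q ℓ 1) := by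
  simpa [lgen, map_mul, map_smul] using Lrel_mk q ℓ LRel.link₄

theorem Lq_link₅ : lgen q ℓ 2 * lgen q ℓ 4 = (ℓ : ℂ) • (lgen q ℓ 4 * lgen q ℓ 2) := by
  simpa [lgen, map_mul, map_smul] using Lrel_mk q ℓ LRel.link₅

theorem Lq_link₆ : lgen q ℓ 7 * lgen q ℓ 2 = (ℓ : ℂ) • (lgen q ℓ 2 * lgen q ℓ 7) := by
  simpa [lgen, map_mul, map_smul] using Lrel_mk q ℓ LRel.link₆

theorem Lq_link₇ : lgen q ℓ 3 * lgen q ℓ 5 = (ℓ : ℂ) • (lgen q ℓ 5 * lgen q ℓ 3) := by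
  simpa [lgen, map_mul, map_smul] using Lrel_mk q ℓ LRel.link₇

theorem Lq_link₈ : lgen q ℓ 6 * lgen q ℓ 3 = (ℓ : ℂ) • (lgen q ℓ 3 * lgen q ℓ 6) := by
  simpa [lgen, map_mul, map_smul] using Lrel_mk q ℓ LRel.link₈

theorem Lq_comm₁ : lgen q ℓ 0 * lgen q ℓ 4 = lgen q ℓ 4 * lgen q ℓ 0 := by
  simpa [lgen, map_mul] using Lrel_mk q ℓ LRel.comm₁

theorem Lq_comm₂ : lgen q ℓ 0 * lgen q ℓ 7 = lgen q ℓ 7 * lgen q ℓ 0 := by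
  simpa [lgen, map_mul] using Lrel_mk q ℓ LRel.comm₂

theorem Lq_comm₃ : lgen q ℓ 1 * lgen q ℓ 5 = lgen q ℓ 5 * lgen q ℓ 1 := by
  simpa [lgen, map_mul] using Lrel_mk q ℓ LRel.comm₃

theorem Lq_comm₄ : lgen q ℓ 1 * lgen q ℓ 6 = lgen q ℓ 6 * lgen q ℓ 1 := by
  simpa [lgen, map_mul] using Lrel_mk q ℓ LRel.comm₄

theorem Lq_comm₅ : lgen q ℓ 2 * lgen q ℓ 5 = lgen q ℓ 5 * lgen q ℓ 2 := by
  simpa [lgen, map_mul] using Lrel_mk q ℓ LRel.comm₅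

theorem Lq_comm₆ : lgen q ℓ 2 * lgen q ℓ 6 = lgen q ℓ 6 * lgen q ℓ 2 := by
  simpa [lgen, map_mul] using Lrel_mk q ℓ LRel.comm₆

theorem Lq_comm₇ : lgen q ℓ 3 * lgen q ℓ 4 = lgen q ℓ 4 * lgen q ℓ 3 := by
  simpa [lgen, map_mul] using Lrel_mk q ℓ LRel.comm₇

theorem Lq_comm₈ : lgen q ℓ 3 * lgen q ℓ 7 = lgen q ℓ 7 * lgen q ℓ 3 := by
  simpa [lgen, map_mul] using Lrel_mk q ℓ LRel.comm₈

theorem Lq_ad : lgen q ℓ 0 * lgen q ℓ 3 - lgen q ℓ 3 * lgen q ℓ 0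
    = (q⁻¹ - q) • (lgen q ℓ 1 * lgen q ℓ 2) := by
  simpa [lgen, map_mul, map_sub, map_smul] using Lrel_mk q ℓ LRel.ad
theorem Lq_ad' : lgen q ℓ 4 * lgen q ℓ 7 - lgen q ℓ 7 * lgen q ℓ 4
    = (q⁻¹ - q) • (lgen q ℓ 5 * lgen q ℓ 6) := by
  simpa [lgen, map_mul, map_sub, map_smul] using Lrel_mk q ℓ LRel.ad'
theorem Lq_det : lgen q ℓ 0 * lgen q ℓ 3 - (q⁻¹ : ℂ) • (lgen q ℓ 1 * lgen q ℓ 2) = 1 := by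
  simpa [lgen, map_mul, map_sub, map_smul, map_one] using Lrel_mk q ℓ LRel.det
theorem Lq_det' : lgen q ℓ 4 * lgen q ℓ 7 - (q⁻¹ : ℂ) • (lgen q ℓ 5 * lgen q ℓ 6) = 1 := by
  simpa [lgen, map_mul, map_sub, map_smul, map_one] using Lrel_mk q ℓ LRel.det'

/-- values of the Euclidean star on the Lorentz generators -/
def vL : Fin 8 → LAlg q ℓ :=
  ![lgen q ℓ 3, (-q⁻¹) • lgen q ℓ 2, (-q) • lgen q ℓ 1, lgen q ℓ 0,
    lgen q ℓ 7, (-q⁻¹) • lgen q ℓ 6, (-q) • lgen q ℓ 5, lgen q ℓ 4]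

theorem vL_0 : vL q ℓ 0 = lgen q ℓ 3 := rfl
theorem vL_1 : vL q ℓ 1 = (-q⁻¹) • lgen q ℓ 2 := rfl
theorem vL_2 : vL q ℓ 2 = (-q) • lgen q ℓ 1 := rfl
theorem vL_3 : vL q ℓ 3 = lgen q ℓ 0 := rfl
theorem vL_4 : vL q ℓ 4 = lgen q ℓ 7 := rfl
theorem vL_5 : vL q ℓ 5 = (-q⁻¹) • lgen q ℓ 6 := rfl
theorem vL_6 : vL q ℓ 6 = (-q) • lgen q ℓ 5 := rfl
theorem vL_7 : vL q ℓ 7 = lgen q ℓ 4 := rfl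

theorem compatL (hcq : (starRingEnd ℂ) q = q) (hq : q ≠ 0)
    (hcℓ : (starRingEnd ℂ) ℓ = ℓ⁻¹) (hℓ : ℓ ≠ 0) :
    ∀ ⦃x y⦄, LRel q ℓ x y → stFree (vL q ℓ) x = stFree (vL q ℓ) y := by
  intro x y h
  cases h with
  | ab =>
      simp only [stFree_mul, stFree_smul, stFree_sub, stFree_one, stFree_ι, vL_0, vL_1, vL_2,
        vL_3, vL_4, vL_5, vL_6, vL_7, map_neg, map_mul, map_inv₀, map_sub, map_one, hcq, hcℓ,
        inv_inv, smul_mul_assoc, mul_smul_comm, smul_smul, neg_smul, neg_neg]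
      all_goals rw [Lq_cd q ℓ]
      all_goals match_scalars
      all_goals field_simp
      all_goals ring
  | ac =>
      simp only [stFree_mul, stFree_smul, stFree_sub, stFree_one, stFree_ι, vL_0, vL_1, vL_2,
        vL_3, vL_4, vL_5, vL_6, vL_7, map_neg, map_mul, map_inv₀, map_sub, map_one, hcq, hcℓ,
        inv_inv, smul_mul_assoc, mul_smul_comm, smul_smul, neg_smul, neg_neg]
      all_goals rw [Lq_bd q ℓ]
      all_goals match_scalars
      all_goals field_simp
      all_goals ring
  | bd =>
      simp only [stFree_mul, stFree_smul, stFree_sub, stFree_one, stFree_ι, vL_0, vL_1, vL_2,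
        vL_3, vL_4, vL_5, vL_6, vL_7, map_neg, map_mul, map_inv₀, map_sub, map_one, hcq, hcℓ,
        inv_inv, smul_mul_assoc, mul_smul_comm, smul_smul, neg_smul, neg_neg]
      all_goals rw [Lq_ac q ℓ]
      all_goals match_scalars
      all_goals field_simp
      all_goals ring
  | cd =>
      simp only [stFree_mul, stFree_smul, stFree_sub, stFree_one, stFree_ι, vL_0, vL_1, vL_2,
        vL_3, vL_4, vL_5, vL_6, vL_7, map_neg, map_mul, map_inv₀, map_sub, map_one, hcq, hcℓ,
        inv_inv, smul_mul_assoc, mul_smul_comm, smul_smul, neg_smul, neg_neg]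
      all_goals rw [Lq_ab q ℓ]
      all_goals match_scalars
      all_goals field_simp
      all_goals ring
  | bc =>
      simp only [stFree_mul, stFree_smul, stFree_sub, stFree_one, stFree_ι, vL_0, vL_1, vL_2,
        vL_3, vL_4, vL_5, vL_6, vL_7, map_neg, map_mul, map_inv₀, map_sub, map_one, hcq, hcℓ,
        inv_inv, smul_mul_assoc, mul_smul_comm, smul_smul, neg_smul, neg_neg]
      all_goals rw [Lq_bc q ℓ]
      all_goals match_scalars
      all_goals field_simp
      all_goals ring
  | ab' =>
      simp only [stFree_mul, stFree_smul, stFree_sub, stFree_one, stFree_ι, vL_0, vL_1, vL_2,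
        vL_3, vL_4, vL_5, vL_6, vL_7, map_neg, map_mul, map_inv₀, map_sub, map_one, hcq, hcℓ,
        inv_inv, smul_mul_assoc, mul_smul_comm, smul_smul, neg_smul, neg_neg]
      all_goals rw [Lq_cd' q ℓ]
      all_goals match_scalars
      all_goals field_simp
      all_goals ring
  | ac' =>
      simp only [stFree_mul, stFree_smul, stFree_sub, stFree_one, stFree_ι, vL_0, vL_1, vL_2,
        vL_3, vL_4, vL_5, vL_6, vL_7, map_neg, map_mul, map_inv₀, map_sub, map_one, hcq, hcℓ,
        inv_inv, smul_mul_assoc, mul_smul_comm, smul_smul, neg_smul, neg_neg]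
      all_goals rw [Lq_bd' q ℓ]
      all_goals match_scalars
      all_goals field_simp
      all_goals ring
  | bd' =>
      simp only [stFree_mul, stFree_smul, stFree_sub, stFree_one, stFree_ι, vL_0, vL_1, vL_2,
        vL_3, vL_4, vL_5, vL_6, vL_7, map_neg, map_mul, map_inv₀, map_sub, map_one, hcq, hcℓ,
        inv_inv, smul_mul_assoc, mul_smul_comm, smul_smul, neg_smul, neg_neg]
      all_goals rw [Lq_ac' q ℓ]
      all_goals match_scalars
      all_goals field_simp
      all_goals ring
  | cd' =>
      simp only [stFree_mul, stFree_smul, stFree_sub, stFree_one, stFree_ι, vL_0, vL_1, vL_2,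
        vL_3, vL_4, vL_5, vL_6, vL_7, map_neg, map_mul, map_inv₀, map_sub, map_one, hcq, hcℓ,
        inv_inv, smul_mul_assoc, mul_smul_comm, smul_smul, neg_smul, neg_neg]
      all_goals rw [Lq_ab' q ℓ]
      all_goals match_scalars
      all_goals field_simp
      all_goals ring
  | bc' =>
      simp only [stFree_mul, stFree_smul, stFree_sub, stFree_one, stFree_ι, vL_0, vL_1, vL_2,
        vL_3, vL_4, vL_5, vL_6, vL_7, map_neg, map_mul, map_inv₀, map_sub, map_one, hcq, hcℓ,
        inv_inv, smul_mul_assoc, mul_smul_comm, smul_smul, neg_smul, neg_neg]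
      all_goals rw [Lq_bc' q ℓ]
      all_goals match_scalars
      all_goals field_simp
      all_goals ring
  | link₁ =>
      simp only [stFree_mul, stFree_smul, stFree_sub, stFree_one, stFree_ι, vL_0, vL_1, vL_2,
        vL_3, vL_4, vL_5, vL_6, vL_7, map_neg, map_mul, map_inv₀, map_sub, map_one, hcq, hcℓ,
        inv_inv, smul_mul_assoc, mul_smul_comm, smul_smul, neg_smul, neg_neg]
      all_goals rw [Lq_link₈ q ℓ]
      all_goals match_scalars
      all_goals field_simp
      all_goals ring
  | link₂ =>
      simp only [stFree_mul, stFree_smul, stFree_sub, stFree_one, stFree_ι, vL_0, vL_1, vL_2,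
        vL_3, vL_4, vL_5, vL_6, vL_7, map_neg, map_mul, map_inv₀, map_sub, map_one, hcq, hcℓ,
        inv_inv, smul_mul_assoc, mul_smul_comm, smul_smul, neg_smul, neg_neg]
      all_goals rw [Lq_link₇ q ℓ]
      all_goals match_scalars
      all_goals field_simp
      all_goals ring
  | link₃ =>
      simp only [stFree_mul, stFree_smul, stFree_sub, stFree_one, stFree_ι, vL_0, vL_1, vL_2,
        vL_3, vL_4, vL_5, vL_6, vL_7, map_neg, map_mul, map_inv₀, map_sub, map_one, hcq, hcℓ,
        inv_inv, smul_mul_assoc, mul_smul_comm, smul_smul, neg_smul, neg_neg]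
      all_goals rw [Lq_link₆ q ℓ]
      all_goals match_scalars
      all_goals field_simp
      all_goals ring
  | link₄ =>
      simp only [stFree_mul, stFree_smul, stFree_sub, stFree_one, stFree_ι, vL_0, vL_1, vL_2,
        vL_3, vL_4, vL_5, vL_6, vL_7, map_neg, map_mul, map_inv₀, map_sub, map_one, hcq, hcℓ,
        inv_inv, smul_mul_assoc, mul_smul_comm, smul_smul, neg_smul, neg_neg]
      all_goals rw [Lq_link₅ q ℓ]
      all_goals match_scalars
      all_goals field_simp
      all_goals ring
  | link₅ =>
      simp only [stFree_mul, stFree_smul, stFree_sub, stFree_one, stFree_ι, vL_0, vL_1, vL_2,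
        vL_3, vL_4, vL_5, vL_6, vL_7, map_neg, map_mul, map_inv₀, map_sub, map_one, hcq, hcℓ,
        inv_inv, smul_mul_assoc, mul_smul_comm, smul_smul, neg_smul, neg_neg]
      all_goals rw [Lq_link₄ q ℓ]
      all_goals match_scalars
      all_goals field_simp
      all_goals ring
  | link₆ =>
      simp only [stFree_mul, stFree_smul, stFree_sub, stFree_one, stFree_ι, vL_0, vL_1, vL_2,
        vL_3, vL_4, vL_5, vL_6, vL_7, map_neg, map_mul, map_inv₀, map_sub, map_one, hcq, hcℓ,
        inv_inv, smul_mul_assoc, mul_smul_comm, smul_smul, neg_smul, neg_neg]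
      all_goals rw [Lq_link₃ q ℓ]
      all_goals match_scalars
      all_goals field_simp
      all_goals ring
  | link₇ =>
      simp only [stFree_mul, stFree_smul, stFree_sub, stFree_one, stFree_ι, vL_0, vL_1, vL_2,
        vL_3, vL_4, vL_5, vL_6, vL_7, map_neg, map_mul, map_inv₀, map_sub, map_one, hcq, hcℓ,
        inv_inv, smul_mul_assoc, mul_smul_comm, smul_smul, neg_smul, neg_neg]
      all_goals rw [Lq_link₂ q ℓ]
      all_goals match_scalars
      all_goals field_simp
      all_goals ring
  | link₈ =>
      simp only [stFree_mul, stFree_smul, stFree_sub, stFree_one, stFree_ι, vL_0, vL_1, vL_2,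
        vL_3, vL_4, vL_5, vL_6, vL_7, map_neg, map_mul, map_inv₀, map_sub, map_one, hcq, hcℓ,
        inv_inv, smul_mul_assoc, mul_smul_comm, smul_smul, neg_smul, neg_neg]
      all_goals rw [Lq_link₁ q ℓ]
      all_goals match_scalars
      all_goals field_simp
      all_goals ring
  | comm₁ =>
      simp only [stFree_mul, stFree_smul, stFree_sub, stFree_one, stFree_ι, vL_0, vL_1, vL_2,
        vL_3, vL_4, vL_5, vL_6, vL_7, map_neg, map_mul, map_inv₀, map_sub, map_one, hcq, hcℓ,
        inv_inv, smul_mul_assoc, mul_smul_comm, smul_smul, neg_smul, neg_neg]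
      all_goals rw [Lq_comm₈ q ℓ]
      all_goals match_scalars
      all_goals field_simp
      all_goals ring
  | comm₂ =>
      simp only [stFree_mul, stFree_smul, stFree_sub, stFree_one, stFree_ι, vL_0, vL_1, vL_2,
        vL_3, vL_4, vL_5, vL_6, vL_7, map_neg, map_mul, map_inv₀, map_sub, map_one, hcq, hcℓ,
        inv_inv, smul_mul_assoc, mul_smul_comm, smul_smul, neg_smul, neg_neg]
      all_goals rw [Lq_comm₇ q ℓ]
      all_goals match_scalars
      all_goals field_simp
      all_goals ring
  | comm₃ =>
      simp only [stFree_mul, stFree_smul, stFree_sub, stFree_one, stFree_ι, vL_0, vL_1, vL_2,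
        vL_3, vL_4, vL_5, vL_6, vL_7, map_neg, map_mul, map_inv₀, map_sub, map_one, hcq, hcℓ,
        inv_inv, smul_mul_assoc, mul_smul_comm, smul_smul, neg_smul, neg_neg]
      all_goals rw [Lq_comm₆ q ℓ]
      all_goals match_scalars
      all_goals field_simp
      all_goals ring
  | comm₄ =>
      simp only [stFree_mul, stFree_smul, stFree_sub, stFree_one, stFree_ι, vL_0, vL_1, vL_2,
        vL_3, vL_4, vL_5, vL_6, vL_7, map_neg, map_mul, map_inv₀, map_sub, map_one, hcq, hcℓ,
        inv_inv, smul_mul_assoc, mul_smul_comm, smul_smul, neg_smul, neg_neg]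
      all_goals rw [Lq_comm₅ q ℓ]
      all_goals match_scalars
      all_goals field_simp
      all_goals ring
  | comm₅ =>
      simp only [stFree_mul, stFree_smul, stFree_sub, stFree_one, stFree_ι, vL_0, vL_1, vL_2,
        vL_3, vL_4, vL_5, vL_6, vL_7, map_neg, map_mul, map_inv₀, map_sub, map_one, hcq, hcℓ,
        inv_inv, smul_mul_assoc, mul_smul_comm, smul_smul, neg_smul, neg_neg]
      all_goals rw [Lq_comm₄ q ℓ]
      all_goals match_scalars
      all_goals field_simp
      all_goals ring
  | comm₆ =>
      simp only [stFree_mul, stFree_smul, stFree_sub, stFree_one, stFree_ι, vL_0, vL_1, vL_2,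
        vL_3, vL_4, vL_5, vL_6, vL_7, map_neg, map_mul, map_inv₀, map_sub, map_one, hcq, hcℓ,
        inv_inv, smul_mul_assoc, mul_smul_comm, smul_smul, neg_smul, neg_neg]
      all_goals rw [Lq_comm₃ q ℓ]
      all_goals match_scalars
      all_goals field_simp
      all_goals ring
  | comm₇ =>
      simp only [stFree_mul, stFree_smul, stFree_sub, stFree_one, stFree_ι, vL_0, vL_1, vL_2,
        vL_3, vL_4, vL_5, vL_6, vL_7, map_neg, map_mul, map_inv₀, map_sub, map_one, hcq, hcℓ,
        inv_inv, smul_mul_assoc, mul_smul_comm, smul_smul, neg_smul, neg_neg]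
      all_goals rw [Lq_comm₂ q ℓ]
      all_goals match_scalars
      all_goals field_simp
      all_goals ring
  | comm₈ =>
      simp only [stFree_mul, stFree_smul, stFree_sub, stFree_one, stFree_ι, vL_0, vL_1, vL_2,
        vL_3, vL_4, vL_5, vL_6, vL_7, map_neg, map_mul, map_inv₀, map_sub, map_one, hcq, hcℓ,
        inv_inv, smul_mul_assoc, mul_smul_comm, smul_smul, neg_smul, neg_neg]
      all_goals rw [Lq_comm₁ q ℓ]
      all_goals match_scalars
      all_goals field_simp
      all_goals ring
  | ad =>
      simp only [stFree_mul, stFree_smul, stFree_sub, stFree_one, stFree_ι, vL_0, vL_1, vL_2,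
        vL_3, vL_4, vL_5, vL_6, vL_7, map_neg, map_mul, map_inv₀, map_sub, map_one, hcq, hcℓ,
        inv_inv, smul_mul_assoc, mul_smul_comm, smul_smul, neg_smul, neg_neg]
      all_goals rw [Lq_ad q ℓ]
      all_goals match_scalars
      all_goals field_simp
      all_goals ring
  | ad' =>
      simp only [stFree_mul, stFree_smul, stFree_sub, stFree_one, stFree_ι, vL_0, vL_1, vL_2,
        vL_3, vL_4, vL_5, vL_6, vL_7, map_neg, map_mul, map_inv₀, map_sub, map_one, hcq, hcℓ,
        inv_inv, smul_mul_assoc, mul_smul_comm, smul_smul, neg_smul, neg_neg]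
      all_goals rw [Lq_ad' q ℓ]
      all_goals match_scalars
      all_goals field_simp
      all_goals ring
  | det =>
      simp only [stFree_mul, stFree_smul, stFree_sub, stFree_one, stFree_ι, vL_0, vL_1, vL_2,
        vL_3, vL_4, vL_5, vL_6, vL_7, map_neg, map_mul, map_inv₀, map_sub, map_one, hcq, hcℓ,
        inv_inv, smul_mul_assoc, mul_smul_comm, smul_smul, neg_smul, neg_neg]
      all_goals rw [← Lq_det q ℓ]
      all_goals match_scalars
      all_goals field_simp
      all_goals ring
  | det' =>
      simp only [stFree_mul, stFree_smul, stFree_sub, stFree_one, stFree_ι, vL_0, vL_1, vL_2,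
        vL_3, vL_4, vL_5, vL_6, vL_7, map_neg, map_mul, map_inv₀, map_sub, map_one, hcq, hcℓ,
        inv_inv, smul_mul_assoc, mul_smul_comm, smul_smul, neg_smul, neg_neg]
      all_goals rw [← Lq_det' q ℓ]
      all_goals match_scalars
      all_goals field_simp
      all_goals ring

end Lsec

section build
variable (q ℓ : ℂ) (hcq : (starRingEnd ℂ) q = q) (hq : q ≠ 0)
  (hcℓ : (starRingEnd ℂ) ℓ = ℓ⁻¹) (hℓ : ℓ ≠ 0)

theorem mkStarM_gen (i : Fin 4) :
    mkStar (vM q ℓ) (compatM q ℓ hcq hq hcℓ hℓ) (tgen q ℓ i) = vM q ℓ i :=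
  mkStar_gen _ _ i

theorem mkStarL_gen (i : Fin 8) :
    mkStar (vL q ℓ) (compatL q ℓ hcq hq hcℓ hℓ) (lgen q ℓ i) = vL q ℓ i :=
  mkStar_gen _ _ i

theorem stM_invol : ∀ x, mkStar (vM q ℓ) (compatM q ℓ hcq hq hcℓ hℓ)
    (mkStar (vM q ℓ) (compatM q ℓ hcq hq hcℓ hℓ) x) = x := by
  refine ringQuot_induction ?_ ?_ ?_ ?_
  · intro z; rw [mkStar_algebraMap, mkStar_algebraMap, Complex.conj_conj]
  · intro i
    fin_cases i
    · show mkStar (vM q ℓ) (compatM q ℓ hcq hq hcℓ hℓ)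
          (mkStar (vM q ℓ) (compatM q ℓ hcq hq hcℓ hℓ) (tgen q ℓ 0)) = tgen q ℓ 0
      rw [mkStarM_gen q ℓ hcq hq hcℓ hℓ, show vM q ℓ 0 = (-(q⁻¹ * ℓ)) • tgen q ℓ 3 from rfl, mkStar_smul, mkStarM_gen q ℓ hcq hq hcℓ hℓ,
        show vM q ℓ 3 = (-(q * ℓ)) • tgen q ℓ 0 from rfl, smul_smul]
      all_goals match_scalars
      all_goals simp only [map_neg, map_mul, map_inv₀, map_one, hcq, hcℓ]
      all_goals field_simp
    · show mkStar (vM q ℓ) (compatM q ℓ hcq hq hcℓ hℓ)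
          (mkStar (vM q ℓ) (compatM q ℓ hcq hq hcℓ hℓ) (tgen q ℓ 1)) = tgen q ℓ 1
      rw [mkStarM_gen q ℓ hcq hq hcℓ hℓ, show vM q ℓ 1 = tgen q ℓ 2 from rfl, mkStarM_gen q ℓ hcq hq hcℓ hℓ]
      rfl
    · show mkStar (vM q ℓ) (compatM q ℓ hcq hq hcℓ hℓ)
          (mkStar (vM q ℓ) (compatM q ℓ hcq hq hcℓ hℓ) (tgen q ℓ 2)) = tgen q ℓ 2
      rw [mkStarM_gen q ℓ hcq hq hcℓ hℓ, show vM q ℓ 2 = tgen q ℓ 1 from rfl, mkStarM_gen q ℓ hcq hq hcℓ hℓ]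
      rfl
    · show mkStar (vM q ℓ) (compatM q ℓ hcq hq hcℓ hℓ)
          (mkStar (vM q ℓ) (compatM q ℓ hcq hq hcℓ hℓ) (tgen q ℓ 3)) = tgen q ℓ 3
      rw [mkStarM_gen q ℓ hcq hq hcℓ hℓ, show vM q ℓ 3 = (-(q * ℓ)) • tgen q ℓ 0 from rfl, mkStar_smul, mkStarM_gen q ℓ hcq hq hcℓ hℓ,
        show vM q ℓ 0 = (-(q⁻¹ * ℓ)) • tgen q ℓ 3 from rfl, smul_smul]
      all_goals match_scalars
      all_goals simp only [map_neg, map_mul, map_inv₀, map_one, hcq, hcℓ]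
      all_goals field_simp
  · intro a b ha hb; rw [mkStar_add, mkStar_add, ha, hb]
  · intro a b ha hb; rw [mkStar_mul, mkStar_mul, hb, ha]

theorem stM_isStar : IsStar (mkStar (vM q ℓ) (compatM q ℓ hcq hq hcℓ hℓ)) :=
  ⟨mkStar_add _ _, mkStar_smul _ _, mkStar_mul _ _, mkStar_one _ _,
    stM_invol q ℓ hcq hq hcℓ hℓ⟩

theorem stM_vals : MStarVals q ℓ (mkStar (vM q ℓ) (compatM q ℓ hcq hq hcℓ hℓ)) :=
  ⟨mkStarM_gen q ℓ hcq hq hcℓ hℓ 0, mkStarM_gen q ℓ hcq hq hcℓ hℓ 1,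
   mkStarM_gen q ℓ hcq hq hcℓ hℓ 2, mkStarM_gen q ℓ hcq hq hcℓ hℓ 3⟩

theorem stL_invol : ∀ x, mkStar (vL q ℓ) (compatL q ℓ hcq hq hcℓ hℓ)
    (mkStar (vL q ℓ) (compatL q ℓ hcq hq hcℓ hℓ) x) = x := by
  refine ringQuot_induction ?_ ?_ ?_ ?_
  · intro z; rw [mkStar_algebraMap, mkStar_algebraMap, Complex.conj_conj]
  · intro i
    fin_cases i
    · show mkStar (vL q ℓ) (compatL q ℓ hcq hq hcℓ hℓ)
          (mkStar (vL q ℓ) (compatL q ℓ hcq hq hcℓ hℓ) (lgen q ℓ 0)) = lgen q ℓ 0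
      rw [mkStarL_gen q ℓ hcq hq hcℓ hℓ, show vL q ℓ 0 = lgen q ℓ 3 from rfl, mkStarL_gen q ℓ hcq hq hcℓ hℓ]
      rfl
    · show mkStar (vL q ℓ) (compatL q ℓ hcq hq hcℓ hℓ)
          (mkStar (vL q ℓ) (compatL q ℓ hcq hq hcℓ hℓ) (lgen q ℓ 1)) = lgen q ℓ 1
      rw [mkStarL_gen q ℓ hcq hq hcℓ hℓ, show vL q ℓ 1 = (-q⁻¹) • lgen q ℓ 2 from rfl, mkStar_smul, mkStarL_gen q ℓ hcq hq hcℓ hℓ,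
        show vL q ℓ 2 = (-q) • lgen q ℓ 1 from rfl, smul_smul]
      all_goals match_scalars
      all_goals simp only [map_neg, map_mul, map_inv₀, map_one, hcq, hcℓ]
      all_goals field_simp
    · show mkStar (vL q ℓ) (compatL q ℓ hcq hq hcℓ hℓ)
          (mkStar (vL q ℓ) (compatL q ℓ hcq hq hcℓ hℓ) (lgen q ℓ 2)) = lgen q ℓ 2
      rw [mkStarL_gen q ℓ hcq hq hcℓ hℓ, show vL q ℓ 2 = (-q) • lgen q ℓ 1 from rfl, mkStar_smul, mkStarL_gen q ℓ hcq hq hcℓ hℓ,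
        show vL q ℓ 1 = (-q⁻¹) • lgen q ℓ 2 from rfl, smul_smul]
      all_goals match_scalars
      all_goals simp only [map_neg, map_mul, map_inv₀, map_one, hcq, hcℓ]
      all_goals field_simp
    · show mkStar (vL q ℓ) (compatL q ℓ hcq hq hcℓ hℓ)
          (mkStar (vL q ℓ) (compatL q ℓ hcq hq hcℓ hℓ) (lgen q ℓ 3)) = lgen q ℓ 3
      rw [mkStarL_gen q ℓ hcq hq hcℓ hℓ, show vL q ℓ 3 = lgen q ℓ 0 from rfl, mkStarL_gen q ℓ hcq hq hcℓ hℓ]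
      rfl
    · show mkStar (vL q ℓ) (compatL q ℓ hcq hq hcℓ hℓ)
          (mkStar (vL q ℓ) (compatL q ℓ hcq hq hcℓ hℓ) (lgen q ℓ 4)) = lgen q ℓ 4
      rw [mkStarL_gen q ℓ hcq hq hcℓ hℓ, show vL q ℓ 4 = lgen q ℓ 7 from rfl, mkStarL_gen q ℓ hcq hq hcℓ hℓ]
      rfl
    · show mkStar (vL q ℓ) (compatL q ℓ hcq hq hcℓ hℓ)
          (mkStar (vL q ℓ) (compatL q ℓ hcq hq hcℓ hℓ) (lgen q ℓ 5)) = lgen q ℓ 5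
      rw [mkStarL_gen q ℓ hcq hq hcℓ hℓ, show vL q ℓ 5 = (-q⁻¹) • lgen q ℓ 6 from rfl, mkStar_smul, mkStarL_gen q ℓ hcq hq hcℓ hℓ,
        show vL q ℓ 6 = (-q) • lgen q ℓ 5 from rfl, smul_smul]
      all_goals match_scalars
      all_goals simp only [map_neg, map_mul, map_inv₀, map_one, hcq, hcℓ]
      all_goals field_simp
    · show mkStar (vL q ℓ) (compatL q ℓ hcq hq hcℓ hℓ)
          (mkStar (vL q ℓ) (compatL q ℓ hcq hq hcℓ hℓ) (lgen q ℓ 6)) = lgen q ℓ 6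
      rw [mkStarL_gen q ℓ hcq hq hcℓ hℓ, show vL q ℓ 6 = (-q) • lgen q ℓ 5 from rfl, mkStar_smul, mkStarL_gen q ℓ hcq hq hcℓ hℓ,
        show vL q ℓ 5 = (-q⁻¹) • lgen q ℓ 6 from rfl, smul_smul]
      all_goals match_scalars
      all_goals simp only [map_neg, map_mul, map_inv₀, map_one, hcq, hcℓ]
      all_goals field_simp
    · show mkStar (vL q ℓ) (compatL q ℓ hcq hq hcℓ hℓ)
          (mkStar (vL q ℓ) (compatL q ℓ hcq hq hcℓ hℓ) (lgen q ℓ 7)) = lgen q ℓ 7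
      rw [mkStarL_gen q ℓ hcq hq hcℓ hℓ, show vL q ℓ 7 = lgen q ℓ 4 from rfl, mkStarL_gen q ℓ hcq hq hcℓ hℓ]
      rfl
  · intro a b ha hb; rw [mkStar_add, mkStar_add, ha, hb]
  · intro a b ha hb; rw [mkStar_mul, mkStar_mul, hb, ha]

theorem stL_isStar : IsStar (mkStar (vL q ℓ) (compatL q ℓ hcq hq hcℓ hℓ)) :=
  ⟨mkStar_add _ _, mkStar_smul _ _, mkStar_mul _ _, mkStar_one _ _,
    stL_invol q ℓ hcq hq hcℓ hℓ⟩

theorem stL_vals : LStarVals q ℓ (mkStar (vL q ℓ) (compatL q ℓ hcq hq hcℓ hℓ)) :=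
  ⟨mkStarL_gen q ℓ hcq hq hcℓ hℓ 0, mkStarL_gen q ℓ hcq hq hcℓ hℓ 1,
   mkStarL_gen q ℓ hcq hq hcℓ hℓ 2, mkStarL_gen q ℓ hcq hq hcℓ hℓ 3,
   mkStarL_gen q ℓ hcq hq hcℓ hℓ 4, mkStarL_gen q ℓ hcq hq hcℓ hℓ 5,
   mkStarL_gen q ℓ hcq hq hcℓ hℓ 6, mkStarL_gen q ℓ hcq hq hcℓ hℓ 7⟩

theorem stM_unique (st' : MAlg q ℓ → MAlg q ℓ) (h1 : IsStar st') (h2 : MStarVals q ℓ st') :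
    st' = mkStar (vM q ℓ) (compatM q ℓ hcq hq hcℓ hℓ) := by
  refine star_unique _ _ h1 (stM_isStar q ℓ hcq hq hcℓ hℓ) ?_
  intro i
  fin_cases i
  · show st' (tgen q ℓ 0) = mkStar (vM q ℓ) (compatM q ℓ hcq hq hcℓ hℓ) (tgen q ℓ 0)
    rw [h2.1, mkStarM_gen q ℓ hcq hq hcℓ hℓ]
    rfl
  · show st' (tgen q ℓ 1) = mkStar (vM q ℓ) (compatM q ℓ hcq hq hcℓ hℓ) (tgen q ℓ 1)
    rw [h2.2.1, mkStarM_gen q ℓ hcq hq hcℓ hℓ]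
    rfl
  · show st' (tgen q ℓ 2) = mkStar (vM q ℓ) (compatM q ℓ hcq hq hcℓ hℓ) (tgen q ℓ 2)
    rw [h2.2.2.1, mkStarM_gen q ℓ hcq hq hcℓ hℓ]
    rfl
  · show st' (tgen q ℓ 3) = mkStar (vM q ℓ) (compatM q ℓ hcq hq hcℓ hℓ) (tgen q ℓ 3)
    rw [h2.2.2.2, mkStarM_gen q ℓ hcq hq hcℓ hℓ]
    rfl

theorem stL_unique (st' : LAlg q ℓ → LAlg q ℓ) (h1 : IsStar st') (h2 : LStarVals q ℓ st') :
    st' = mkStar (vL q ℓ) (compatL q ℓ hcq hq hcℓ hℓ) := by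
  refine star_unique _ _ h1 (stL_isStar q ℓ hcq hq hcℓ hℓ) ?_
  intro i
  fin_cases i
  · show st' (lgen q ℓ 0) = mkStar (vL q ℓ) (compatL q ℓ hcq hq hcℓ hℓ) (lgen q ℓ 0)
    rw [h2.1, mkStarL_gen q ℓ hcq hq hcℓ hℓ]
    rfl
  · show st' (lgen q ℓ 1) = mkStar (vL q ℓ) (compatL q ℓ hcq hq hcℓ hℓ) (lgen q ℓ 1)
    rw [h2.2.1, mkStarL_gen q ℓ hcq hq hcℓ hℓ]
    rfl
  · show st' (lgen q ℓ 2) = mkStar (vL q ℓ) (compatL q ℓ hcq hq hcℓ hℓ) (lgen q ℓ 2)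
    rw [h2.2.2.1, mkStarL_gen q ℓ hcq hq hcℓ hℓ]
    rfl
  · show st' (lgen q ℓ 3) = mkStar (vL q ℓ) (compatL q ℓ hcq hq hcℓ hℓ) (lgen q ℓ 3)
    rw [h2.2.2.2.1, mkStarL_gen q ℓ hcq hq hcℓ hℓ]
    rfl
  · show st' (lgen q ℓ 4) = mkStar (vL q ℓ) (compatL q ℓ hcq hq hcℓ hℓ) (lgen q ℓ 4)
    rw [h2.2.2.2.2.1, mkStarL_gen q ℓ hcq hq hcℓ hℓ]
    rfl
  · show st' (lgen q ℓ 5) = mkStar (vL q ℓ) (compatL q ℓ hcq hq hcℓ hℓ) (lgen q ℓ 5)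
    rw [h2.2.2.2.2.2.1, mkStarL_gen q ℓ hcq hq hcℓ hℓ]
    rfl
  · show st' (lgen q ℓ 6) = mkStar (vL q ℓ) (compatL q ℓ hcq hq hcℓ hℓ) (lgen q ℓ 6)
    rw [h2.2.2.2.2.2.2.1, mkStarL_gen q ℓ hcq hq hcℓ hℓ]
    rfl
  · show st' (lgen q ℓ 7) = mkStar (vL q ℓ) (compatL q ℓ hcq hq hcℓ hℓ) (lgen q ℓ 7)
    rw [h2.2.2.2.2.2.2.2, mkStarL_gen q ℓ hcq hq hcℓ hℓ]
    rfl

end build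

section coact
variable (q ℓ : ℂ)

-- matrix entry reductions
theorem tm00 : tmat q ℓ 0 0 = tgen q ℓ 0 := rfl
theorem tm01 : tmat q ℓ 0 1 = tgen q ℓ 1 := rfl
theorem tm10 : tmat q ℓ 1 0 = tgen q ℓ 2 := rfl
theorem tm11 : tmat q ℓ 1 1 = tgen q ℓ 3 := rfl
theorem ym00 : ymat q ℓ 0 0 = lgen q ℓ 4 := rfl
theorem ym01 : ymat q ℓ 0 1 = lgen q ℓ 5 := rfl
theorem ym10 : ymat q ℓ 1 0 = lgen q ℓ 6 := rfl
theorem ym11 : ymat q ℓ 1 1 = lgen q ℓ 7 := rfl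
theorem sm00 : σmat q ℓ 0 0 = lgen q ℓ 3 := rfl
theorem sm01 : σmat q ℓ 0 1 = (-q) • lgen q ℓ 1 := rfl
theorem sm10 : σmat q ℓ 1 0 = (-q⁻¹) • lgen q ℓ 2 := rfl
theorem sm11 : σmat q ℓ 1 1 = lgen q ℓ 0 := rfl

variable (stL : LAlg q ℓ → LAlg q ℓ) (stM : MAlg q ℓ → MAlg q ℓ)
  (hL : IsStar stL) (hM : IsStar stM)

/-- the conjugate-linear tensor-product map `stL ⊗ stM` as an additive map -/
noncomputable def Tmap : (LAlg q ℓ ⊗[ℂ] MAlg q ℓ) →+ (LAlg q ℓ ⊗[ℂ] MAlg q ℓ) :=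
  letI : AddGroup (MAlg q ℓ →+ LAlg q ℓ ⊗[ℂ] MAlg q ℓ) :=
    (AddMonoidHom.instAddCommGroup (M := MAlg q ℓ) (N := LAlg q ℓ ⊗[ℂ] MAlg q ℓ)).toAddGroup
  TensorProduct.liftAddHom
    (AddMonoidHom.mk' (fun x => AddMonoidHom.mk'
        (fun y => stL x ⊗ₜ[ℂ] stM y) (fun y y' => by
          show stL x ⊗ₜ[ℂ] stM (y + y') = stL x ⊗ₜ[ℂ] stM y + stL x ⊗ₜ[ℂ] stM y'
          rw [hM.1, TensorProduct.tmul_add]))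
      (fun x x' => by
        ext y
        simp only [AddMonoidHom.mk'_apply, AddMonoidHom.add_apply]
        rw [hL.1, TensorProduct.add_tmul]))
    (fun z x y => by
      show (stL (z • x)) ⊗ₜ[ℂ] stM y = stL x ⊗ₜ[ℂ] stM (z • y)
      rw [hL.2.1, hM.2.1, TensorProduct.smul_tmul])

theorem Tmap_tmul (x : LAlg q ℓ) (y : MAlg q ℓ) :
    Tmap q ℓ stL stM hL hM (x ⊗ₜ[ℂ] y) = stL x ⊗ₜ[ℂ] stM y :=
  TensorProduct.liftAddHom_tmul _ _ _ _

theorem Tmap_smul (z : ℂ) (u : LAlg q ℓ ⊗[ℂ] MAlg q ℓ) :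
    Tmap q ℓ stL stM hL hM (z • u) = (starRingEnd ℂ) z • Tmap q ℓ stL stM hL hM u := by
  induction u using TensorProduct.induction_on with
  | zero => simp
  | tmul x y =>
      rw [TensorProduct.smul_tmul', Tmap_tmul, Tmap_tmul, hL.2.1, TensorProduct.smul_tmul']
  | add u₁ u₂ h₁ h₂ => rw [smul_add, map_add, h₁, h₂, map_add, smul_add]

theorem Tmap_antimul (u v : LAlg q ℓ ⊗[ℂ] MAlg q ℓ) :
    Tmap q ℓ stL stM hL hM (u * v) =
      Tmap q ℓ stL stM hL hM v * Tmap q ℓ stL stM hL hM u := by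
  induction u using TensorProduct.induction_on with
  | zero => simp
  | tmul x y =>
      induction v using TensorProduct.induction_on with
      | zero => simp
      | tmul x' y' =>
          rw [Algebra.TensorProduct.tmul_mul_tmul, Tmap_tmul, Tmap_tmul, Tmap_tmul,
            Algebra.TensorProduct.tmul_mul_tmul, hL.2.2.1, hM.2.2.1]
      | add u₁ u₂ h₁ h₂ => rw [mul_add, map_add, h₁, h₂, map_add, add_mul]
  | add u₁ u₂ h₁ h₂ => rw [add_mul, map_add, h₁, h₂, map_add, mul_add]

theorem Tmap_algebraMap (z : ℂ) :
    Tmap q ℓ stL stM hL hM (algebraMap ℂ _ z) = algebraMap ℂ _ ((starRingEnd ℂ) z) := by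
  rw [Algebra.TensorProduct.algebraMap_apply, Algebra.TensorProduct.algebraMap_apply,
    Tmap_tmul, hL.map_algebraMap, hM.2.2.2.1]

set_option maxHeartbeats 2000000 in
theorem coact_intertwine (hcq : (starRingEnd ℂ) q = q) (hq : q ≠ 0)
    (hcℓ : (starRingEnd ℂ) ℓ = ℓ⁻¹) (hℓ : ℓ ≠ 0)
    (ρ : MAlg q ℓ →ₐ[ℂ] (LAlg q ℓ ⊗[ℂ] MAlg q ℓ))
    (hMv : MStarVals q ℓ stM) (hLv : LStarVals q ℓ stL) (hρ : IsCoaction q ℓ ρ) :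
    ∀ x, ρ (stM x) = Tmap q ℓ stL stM hL hM (ρ x) := by
  refine ringQuot_induction ?_ ?_ ?_ ?_
  · intro z
    rw [hM.map_algebraMap, AlgHom.commutes, AlgHom.commutes, Tmap_algebraMap]
  · intro i
    fin_cases i
    · show ρ (stM (tgen q ℓ 0)) = Tmap q ℓ stL stM hL hM (ρ (tgen q ℓ 0))
      rw [hMv.1, show tgen q ℓ 0 = tmat q ℓ 0 0 from rfl]
      rw [show tgen q ℓ 3 = tmat q ℓ 1 1 from rfl]
      try rw [map_smul]
      rw [hρ 1 1, hρ 0 0]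
      simp only [Fin.sum_univ_two, tm00, tm01, tm10, tm11, ym00, ym01, ym10, ym11, sm00, sm01, sm10, sm11,
        map_add, map_smul, Tmap_tmul, Tmap_smul, hL.2.2.1, hL.2.1, hM.2.1, hLv.1, hLv.2.1, hLv.2.2.1,
        hLv.2.2.2.1, hLv.2.2.2.2.1, hLv.2.2.2.2.2.1, hLv.2.2.2.2.2.2.1, hLv.2.2.2.2.2.2.2,
        hMv.1, hMv.2.1, hMv.2.2.1, hMv.2.2.2, map_neg, map_mul, map_inv₀, hcq, hcℓ,
        smul_mul_assoc, mul_smul_comm, smul_smul, ← TensorProduct.smul_tmul', TensorProduct.tmul_smul, ← neg_smul,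
        smul_add, neg_smul, neg_neg]
      rw [Lq_comm₂ q ℓ, Lq_comm₄ q ℓ, Lq_link₂ q ℓ, Lq_link₄ q ℓ]
      simp only [← neg_smul, ← TensorProduct.smul_tmul', smul_smul]
      all_goals match_scalars
      all_goals field_simp
      all_goals ring
    · show ρ (stM (tgen q ℓ 1)) = Tmap q ℓ stL stM hL hM (ρ (tgen q ℓ 1))
      rw [hMv.2.1, show tgen q ℓ 1 = tmat q ℓ 0 1 from rfl]
      rw [show tgen q ℓ 2 = tmat q ℓ 1 0 from rfl]
      try rw [map_smul]
      rw [hρ 1 0, hρ 0 1]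
      simp only [Fin.sum_univ_two, tm00, tm01, tm10, tm11, ym00, ym01, ym10, ym11, sm00, sm01, sm10, sm11,
        map_add, map_smul, Tmap_tmul, Tmap_smul, hL.2.2.1, hL.2.1, hM.2.1, hLv.1, hLv.2.1, hLv.2.2.1,
        hLv.2.2.2.1, hLv.2.2.2.2.1, hLv.2.2.2.2.2.1, hLv.2.2.2.2.2.2.1, hLv.2.2.2.2.2.2.2,
        hMv.1, hMv.2.1, hMv.2.2.1, hMv.2.2.2, map_neg, map_mul, map_inv₀, hcq, hcℓ,
        smul_mul_assoc, mul_smul_comm, smul_smul, ← TensorProduct.smul_tmul', TensorProduct.tmul_smul, ← neg_smul,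
        smul_add, neg_smul, neg_neg]
      rw [Lq_link₈ q ℓ, Lq_comm₆ q ℓ, Lq_comm₈ q ℓ, Lq_link₆ q ℓ]
      simp only [← neg_smul, ← TensorProduct.smul_tmul', smul_smul]
      all_goals match_scalars
      all_goals field_simp
      all_goals ring
    · show ρ (stM (tgen q ℓ 2)) = Tmap q ℓ stL stM hL hM (ρ (tgen q ℓ 2))
      rw [hMv.2.2.1, show tgen q ℓ 2 = tmat q ℓ 1 0 from rfl]
      rw [show tgen q ℓ 1 = tmat q ℓ 0 1 from rfl]
      try rw [map_smul]
      rw [hρ 0 1, hρ 1 0]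
      simp only [Fin.sum_univ_two, tm00, tm01, tm10, tm11, ym00, ym01, ym10, ym11, sm00, sm01, sm10, sm11,
        map_add, map_smul, Tmap_tmul, Tmap_smul, hL.2.2.1, hL.2.1, hM.2.1, hLv.1, hLv.2.1, hLv.2.2.1,
        hLv.2.2.2.1, hLv.2.2.2.2.1, hLv.2.2.2.2.2.1, hLv.2.2.2.2.2.2.1, hLv.2.2.2.2.2.2.2,
        hMv.1, hMv.2.1, hMv.2.2.1, hMv.2.2.2, map_neg, map_mul, map_inv₀, hcq, hcℓ,
        smul_mul_assoc, mul_smul_comm, smul_smul, ← TensorProduct.smul_tmul', TensorProduct.tmul_smul, ← neg_smul,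
        smul_add, neg_smul, neg_neg]
      rw [Lq_link₃ q ℓ, Lq_comm₁ q ℓ, Lq_comm₃ q ℓ, Lq_link₁ q ℓ]
      simp only [← neg_smul, ← TensorProduct.smul_tmul', smul_smul]
      all_goals match_scalars
      all_goals field_simp
      all_goals ring
    · show ρ (stM (tgen q ℓ 3)) = Tmap q ℓ stL stM hL hM (ρ (tgen q ℓ 3))
      rw [hMv.2.2.2, show tgen q ℓ 3 = tmat q ℓ 1 1 from rfl]
      rw [show tgen q ℓ 0 = tmat q ℓ 0 0 from rfl]
      try rw [map_smul]
      rw [hρ 0 0, hρ 1 1]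
      simp only [Fin.sum_univ_two, tm00, tm01, tm10, tm11, ym00, ym01, ym10, ym11, sm00, sm01, sm10, sm11,
        map_add, map_smul, Tmap_tmul, Tmap_smul, hL.2.2.1, hL.2.1, hM.2.1, hLv.1, hLv.2.1, hLv.2.2.1,
        hLv.2.2.2.1, hLv.2.2.2.2.1, hLv.2.2.2.2.2.1, hLv.2.2.2.2.2.2.1, hLv.2.2.2.2.2.2.2,
        hMv.1, hMv.2.1, hMv.2.2.1, hMv.2.2.2, map_neg, map_mul, map_inv₀, hcq, hcℓ,
        smul_mul_assoc, mul_smul_comm, smul_smul, ← TensorProduct.smul_tmul', TensorProduct.tmul_smul, ← neg_smul,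
        smul_add, neg_smul, neg_neg]
      rw [Lq_comm₇ q ℓ, Lq_link₅ q ℓ, Lq_link₇ q ℓ, Lq_comm₅ q ℓ]
      simp only [← neg_smul, ← TensorProduct.smul_tmul', smul_smul]
      all_goals match_scalars
      all_goals field_simp
      all_goals ring
  · intro a b ha hb
    rw [hM.1, map_add, ha, hb, map_add, map_add]
  · intro a b ha hb
    rw [hM.2.2.1, map_mul, hb, ha, ← Tmap_antimul q ℓ stL stM hL hM, ← map_mul]

end coact

/-- For nonzero real `q` and `ℓ` of modulus one: (i) there is a unique star structure
`★ₑ` on `M^{ℓ,q}` with `t₁₁^★ = −q⁻¹ℓ·t₂₂`, `t₁₂^★ = t₂₁`, `t₂₁^★ = t₁₂`,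
`t₂₂^★ = −qℓ·t₁₁`; (ii) there is a unique star structure `★ₑ⊕★ₑ` on `L_{q,ℓ}` with
the Euclidean values on both sectors; (iii) the coaction `ρ` intertwines them:
`ρ ∘ ★ₑ = ((★ₑ⊕★ₑ) ⊗ ★ₑ) ∘ ρ`.  (The real q-linked Euclidean space as a quantum
homogeneous space for `SO_q^ℓ(4)`.) -/
theorem euclidean_real_form (q : ℝ) (ℓ : ℂ) (hq : q ≠ 0) (hℓ : ‖ℓ‖ = 1) :
    (∃! st : MAlg ((q : ℂ)) ℓ → MAlg ((q : ℂ)) ℓ, IsStar st ∧ MStarVals ((q : ℂ)) ℓ st) ∧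
    (∃! st : LAlg ((q : ℂ)) ℓ → LAlg ((q : ℂ)) ℓ, IsStar st ∧ LStarVals ((q : ℂ)) ℓ st) ∧
    (∀ (stM : MAlg ((q : ℂ)) ℓ → MAlg ((q : ℂ)) ℓ) (stL : LAlg ((q : ℂ)) ℓ → LAlg ((q : ℂ)) ℓ)
        (ρ : MAlg ((q : ℂ)) ℓ →ₐ[ℂ] (LAlg ((q : ℂ)) ℓ ⊗[ℂ] MAlg ((q : ℂ)) ℓ)),
      IsStar stM → MStarVals ((q : ℂ)) ℓ stM → IsStar stL → LStarVals ((q : ℂ)) ℓ stL →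
      IsCoaction ((q : ℂ)) ℓ ρ →
        ∃ T : (LAlg ((q : ℂ)) ℓ ⊗[ℂ] MAlg ((q : ℂ)) ℓ) → (LAlg ((q : ℂ)) ℓ ⊗[ℂ] MAlg ((q : ℂ)) ℓ),
          (∀ u v, T (u + v) = T u + T v) ∧
          (∀ (x : LAlg ((q : ℂ)) ℓ) (y : MAlg ((q : ℂ)) ℓ),
            T (x ⊗ₜ[ℂ] y) = stL x ⊗ₜ[ℂ] stM y) ∧
          (∀ x : MAlg ((q : ℂ)) ℓ, ρ (stM x) = T (ρ x))) := by
  have hcq : (starRingEnd ℂ) (q : ℂ) = (q : ℂ) := Complex.conj_ofReal q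
  have hq' : (q : ℂ) ≠ 0 := Complex.ofReal_ne_zero.mpr hq
  have hℓ0 : ℓ ≠ 0 := by
    intro h; rw [h] at hℓ; simp at hℓ
  have hmc : (starRingEnd ℂ) ℓ * ℓ = 1 := by
    rw [mul_comm, Complex.mul_conj]
    norm_cast
    rw [Complex.normSq_eq_norm_sq, hℓ]; norm_num
  have hcℓ : (starRingEnd ℂ) ℓ = ℓ⁻¹ := eq_inv_of_mul_eq_one_left hmc
  refine ⟨⟨mkStar (vM ((q : ℂ)) ℓ) (compatM ((q : ℂ)) ℓ hcq hq' hcℓ hℓ0),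
      ⟨stM_isStar _ _ hcq hq' hcℓ hℓ0, stM_vals _ _ hcq hq' hcℓ hℓ0⟩,
      fun y hy => stM_unique _ _ hcq hq' hcℓ hℓ0 y hy.1 hy.2⟩,
    ⟨mkStar (vL ((q : ℂ)) ℓ) (compatL ((q : ℂ)) ℓ hcq hq' hcℓ hℓ0),
      ⟨stL_isStar _ _ hcq hq' hcℓ hℓ0, stL_vals _ _ hcq hq' hcℓ hℓ0⟩,
      fun y hy => stL_unique _ _ hcq hq' hcℓ hℓ0 y hy.1 hy.2⟩, ?_⟩
  intro stM stL ρ hM hMv hL hLv hρ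
  exact ⟨Tmap _ _ stL stM hL hM, fun u v => map_add _ u v,
    Tmap_tmul _ _ stL stM hL hM,
    fun x => coact_intertwine _ _ stL stM hL hM hcq hq' hcℓ hℓ0 ρ hMv hLv hρ x⟩
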